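/- In the setting of the quiver Q(a) with relations as above, the representations Δ(1), ..., Δ(t) are pairwise non-isomorphic indecomposable representations, and Hom(Δ(i), Δ(j)) ≠ 0 if and only if j ≤ i (with the convention that Δ(i)_m = k for m ≥ i). -/

import Mathlib

universe u v

/-- A representation of the quiver `Q(a)` for `a = (a1, a2, a3)`: vector spaces `V j` and
linear maps `α j : V j → V (j+1)`, `β₁ : V b₂ → V b₁`, `β₂ : V b₃ → V b₂`, where
`b₁ = a1`, `b₂ = a1 + a2`, `b₃ = a1 + a2 + a3` (only the vertices `1, …, b₃` are relevant). -/
structure QRep (k : Type u) [Field k] (a1 a2 a3 : ℕ) where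
  V : ℕ → Type v
  [grp : ∀ j, AddCommGroup (V j)]
  [mod : ∀ j, Module k (V j)]
  α : ∀ j, V j →ₗ[k] V (j + 1)
  β1 : V (a1 + a2) →ₗ[k] V a1
  β2 : V (a1 + a2 + a3) →ₗ[k] V (a1 + a2)

attribute [instance] QRep.grp QRep.mod

variable {k : Type u} [Field k] {a1 a2 a3 : ℕ}

/-- the composite `α_{u+len-1} ∘ ⋯ ∘ α_u : V u → V (u + len)`. -/
def pathMap (M : QRep k a1 a2 a3) (u : ℕ) : (len : ℕ) → (M.V u →ₗ[k] M.V (u + len))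
  | 0 => LinearMap.id
  | (len + 1) => (M.α (u + len)).comp (pathMap M u len)

/-- the relation `β₁ ∘ α_{b₂-1} ∘ ⋯ ∘ α_{b₁} = 0`. -/
def Rel1 (M : QRep k a1 a2 a3) : Prop := M.β1.comp (pathMap M a1 a2) = 0

/-- the relation `α_{b₂-1} ⋯ α_{b₁} ∘ β₁ = β₂ ∘ α_{b₃-1} ⋯ α_{b₂}`. -/
def Rel2 (M : QRep k a1 a2 a3) : Prop :=
  (pathMap M a1 a2).comp M.β1 = M.β2.comp (pathMap M (a1 + a2) a3)

/-- the vector space at vertex `j` of the standard module `Δ(i)`: it is `k` if `j ≥ i` and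
`0` otherwise (realized as the submodules `⊤` resp. `⊥` of `k`). -/
def DeltaV (k : Type u) [Field k] (i j : ℕ) : Submodule k k := if i ≤ j then ⊤ else ⊥

/-- the standard module `Δ(i)`: the maps `α_j` act as the identity for `j ≥ i` (and are zero
otherwise, the source being the zero space), and `β₁`, `β₂` act as zero. -/
def Delta (k : Type u) [Field k] (a1 a2 a3 i : ℕ) : QRep k a1 a2 a3 where
  V j := ↥(DeltaV k i j)
  grp := fun _ => inferInstance
  mod := fun _ => inferInstance
  α j := Submodule.inclusion (by
    unfold DeltaV
    split_ifs with h1 h2 <;> first | exact le_rfl | exact bot_le | omega)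
  β1 := 0
  β2 := 0

/-- a morphism of representations of `Q(a)`: linear maps at each vertex commuting with the
structure maps. -/
structure QHom (M N : QRep k a1 a2 a3) where
  f : ∀ j, M.V j →ₗ[k] N.V j
  hα : ∀ j, (N.α j).comp (f j) = (f (j + 1)).comp (M.α j)
  hβ1 : N.β1.comp (f (a1 + a2)) = (f a1).comp M.β1
  hβ2 : N.β2.comp (f (a1 + a2 + a3)) = (f (a1 + a2)).comp M.β2

lemma mem_one {i m : ℕ} (h : i ≤ m) : (1:k) ∈ DeltaV k i m := by simp [DeltaV, h]

def done (k : Type u) [Field k] (i m : ℕ) (h : i ≤ m) : ↥(DeltaV k i m) := ⟨1, mem_one h⟩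

lemma eq_smul_one {i m : ℕ} (h : i ≤ m) (x : ↥(DeltaV k i m)) :
    x = x.1 • done k i m h := by
  apply Subtype.ext; simp [done]

lemma eq_zero_of_not_le {i m : ℕ} (h : ¬ i ≤ m) (x : ↥(DeltaV k i m)) : x = 0 := by
  apply Subtype.ext
  have hx : (x : k) ∈ DeltaV k i m := x.2
  simp only [DeltaV, h, if_false, Submodule.mem_bot] at hx
  exact hx

lemma deltaV_mono {i j : ℕ} (hji : j ≤ i) (m : ℕ) : DeltaV k i m ≤ DeltaV k j m := by
  unfold DeltaV
  split_ifs with h1 h2 <;> first | exact le_rfl | exact bot_le | omega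

def sval {i m : ℕ} (x : (Delta k a1 a2 a3 i).V m) : k := (x : ↥(DeltaV k i m)).1

@[simp] lemma sval_zero {i m : ℕ} : sval (0 : (Delta k a1 a2 a3 i).V m) = 0 := rfl

lemma delta_alpha_coe (i m : ℕ) (x : (Delta k a1 a2 a3 i).V m) :
    sval ((Delta k a1 a2 a3 i).α m x) = sval x := rfl

lemma delta_alpha_one {i m : ℕ} (h : i ≤ m) :
    (Delta k a1 a2 a3 i).α m (done k i m h) = done k i (m+1) (h.trans (Nat.le_succ m)) :=
  Subtype.ext rfl

lemma prop_step {i j : ℕ} (u : QHom (Delta k a1 a2 a3 i) (Delta k a1 a2 a3 j)) {m : ℕ}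
    (h : i ≤ m) :
    sval (u.f (m+1) (done k i (m+1) (h.trans (Nat.le_succ m))))
      = sval (u.f m (done k i m h)) := by
  have := congrArg (fun g => sval (g (done k i m h))) (u.hα m)
  exact (congrArg sval (LinearMap.congr_fun (u.hα m) (done k i m h))).symm

lemma s_const {i j : ℕ} (u : QHom (Delta k a1 a2 a3 i) (Delta k a1 a2 a3 j)) :
    ∀ d, sval (u.f (i+d) (done k i (i+d) (Nat.le_add_right i d)))
      = sval (u.f i (done k i i le_rfl))
  | 0 => rfl
  | (d+1) => (prop_step u (Nat.le_add_right i d)).trans (s_const u d)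

lemma f_eq_zero {i j m : ℕ} (u : QHom (Delta k a1 a2 a3 i) (Delta k a1 a2 a3 j)) (h : i ≤ m)
    (hs : sval (u.f m (done k i m h)) = 0) : u.f m = 0 := by
  ext x
  erw [eq_smul_one h x, map_smul, show u.f m (done k i m h) = 0 from Subtype.ext hs]
  simp
  rfl

lemma all_zero {i j : ℕ} (hij : i < j) (u : QHom (Delta k a1 a2 a3 i) (Delta k a1 a2 a3 j))
    (m : ℕ) : u.f m = 0 := by
  by_cases hm : i ≤ m
  · obtain ⟨d, rfl⟩ := Nat.exists_eq_add_of_le hm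
    apply f_eq_zero u (Nat.le_add_right i d)
    rw [s_const u d, show u.f i (done k i i le_rfl) = 0 from eq_zero_of_not_le (by omega) _]
    rfl
  · ext x
    erw [eq_zero_of_not_le hm x, map_zero]
    rfl

def incl {i j : ℕ} (hji : j ≤ i) : QHom (Delta k a1 a2 a3 i) (Delta k a1 a2 a3 j) where
  f m := Submodule.inclusion (deltaV_mono hji m)
  hα m := by ext x; exact Subtype.ext rfl
  hβ1 := by
    show (0 : _ →ₗ[k] _).comp _ = _
    erw [LinearMap.zero_comp]
  hβ2 := by
    show (0 : _ →ₗ[k] _).comp _ = _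
    erw [LinearMap.zero_comp]

lemma incl_ne_zero {i j : ℕ} (hji : j ≤ i) : (incl (k := k) (a1 := a1) (a2 := a2) (a3 := a3) hji).f i ≠ 0 := by
  intro h0
  have := congrArg (fun g => sval (g (done k i i le_rfl))) h0
  change (1:k) = 0 at this
  exact one_ne_zero (α := k) this

theorem stmt9' (i j : ℕ) :
    (∀ e : QHom (Delta k a1 a2 a3 i) (Delta k a1 a2 a3 i),
      (∀ m, (e.f m).comp (e.f m) = e.f m) →
      (∀ m, e.f m = 0) ∨ (∀ m, e.f m = LinearMap.id)) ∧
    (i ≠ j → ¬ ∃ (u : QHom (Delta k a1 a2 a3 i) (Delta k a1 a2 a3 j))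
      (v : QHom (Delta k a1 a2 a3 j) (Delta k a1 a2 a3 i)),
      (∀ m, (v.f m).comp (u.f m) = LinearMap.id) ∧
      (∀ m, (u.f m).comp (v.f m) = LinearMap.id)) ∧
    ((∃ u : QHom (Delta k a1 a2 a3 i) (Delta k a1 a2 a3 j), ∃ m, u.f m ≠ 0) ↔ j ≤ i) := by
  refine ⟨?_, ?_, ?_⟩
  · intro e hid
    set c : k := sval (e.f i (done k i i le_rfl)) with hc
    have hone : e.f i (done k i i le_rfl) = c • done k i i le_rfl := eq_smul_one le_rfl _
    have hcc : c * c = c := by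
      have := congrArg (fun g => sval (g (done k i i le_rfl))) (hid i)
      change sval (e.f i (e.f i (done k i i le_rfl))) = sval (e.f i (done k i i le_rfl)) at this
      erw [hone, map_smul, hone] at this
      have h2 : c * (c * 1) = c * 1 := this
      simpa using h2
    have hc01 : c = 0 ∨ c = 1 := by
      rcases eq_or_ne c 0 with h | h
      · exact Or.inl h
      · exact Or.inr (by field_simp at hcc; exact hcc)
    rcases hc01 with h | h
    · left
      intro m
      by_cases hm : i ≤ m
      · obtain ⟨d, rfl⟩ := Nat.exists_eq_add_of_le hm
        exact f_eq_zero e (Nat.le_add_right i d) ((s_const e d).trans h)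
      · ext x
        erw [eq_zero_of_not_le hm x, map_zero]; rfl
    · right
      intro m
      ext x
      show e.f m x = x
      by_cases hm : i ≤ m
      · obtain ⟨d, rfl⟩ := Nat.exists_eq_add_of_le hm
        have hs : sval (e.f (i+d) (done k i (i+d) (Nat.le_add_right i d))) = 1 :=
          (s_const e d).trans h
        have h1 : e.f (i+d) (done k i (i+d) (Nat.le_add_right i d))
            = done k i (i+d) (Nat.le_add_right i d) :=
          Subtype.ext (by simpa [sval, done] using hs)
        erw [eq_smul_one (Nat.le_add_right i d) x, map_smul, h1]
        rfl
      · erw [eq_zero_of_not_le hm x, map_zero]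
        rfl
  · rintro hij ⟨u, v, hvu, huv⟩
    rcases Nat.lt_or_ge i j with h | h
    · have hu := all_zero h u j
      have := congrArg (fun g => sval (g (done k i j h.le))) (hvu j)
      simp only [LinearMap.comp_apply, hu, LinearMap.zero_apply, map_zero,
        LinearMap.id_apply] at this
      erw [LinearMap.comp_zero] at this
      exact one_ne_zero (α := k) this.symm
    · have h' : j < i := lt_of_le_of_ne h (Ne.symm hij)
      have hv := all_zero h' v i
      have := congrArg (fun g => sval (g (done k j i h'.le))) (huv i)
      simp only [LinearMap.comp_apply, hv, LinearMap.zero_apply, map_zero,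
        LinearMap.id_apply] at this
      erw [LinearMap.comp_zero] at this
      exact one_ne_zero (α := k) this.symm
  · constructor
    · rintro ⟨u, m, hm⟩
      by_contra hji
      exact hm (all_zero (by omega) u m)
    · intro hji
      exact ⟨incl hji, i, incl_ne_zero hji⟩


/-- The standard modules `Δ(1), …, Δ(t)` are indecomposable (every idempotent endomorphism
is `0` or the identity), pairwise non-isomorphic, and `Hom(Δ(i), Δ(j)) ≠ 0` iff `j ≤ i`. -/
theorem stmt9 (ha1 : 1 ≤ a1) (ha2 : 1 ≤ a2) (ha3 : 1 ≤ a3)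
    (i : ℕ) (hi1 : 1 ≤ i) (hi2 : i ≤ a1 + a2 + a3)
    (j : ℕ) (hj1 : 1 ≤ j) (hj2 : j ≤ a1 + a2 + a3) :
    (∀ e : QHom (Delta k a1 a2 a3 i) (Delta k a1 a2 a3 i),
      (∀ m, (e.f m).comp (e.f m) = e.f m) →
      (∀ m, e.f m = 0) ∨ (∀ m, e.f m = LinearMap.id)) ∧
    (i ≠ j → ¬ ∃ (u : QHom (Delta k a1 a2 a3 i) (Delta k a1 a2 a3 j))
      (v : QHom (Delta k a1 a2 a3 j) (Delta k a1 a2 a3 i)),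
      (∀ m, (v.f m).comp (u.f m) = LinearMap.id) ∧
      (∀ m, (u.f m).comp (v.f m) = LinearMap.id)) ∧
    ((∃ u : QHom (Delta k a1 a2 a3 i) (Delta k a1 a2 a3 j), ∃ m, u.f m ≠ 0) ↔ j ≤ i) := stmt9' i j
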